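/- Let \alpha \in [0,1), \beta > 0, and consider the one-type map h(p) = g_\alpha(1 - e^{-\beta p}) on [0,1]. (i) If (1-\alpha)\beta \le 1 then \lim_{k\to\infty} h^k(p) = 0 for every p \in [0,1]. (ii) If (1-\alpha)\beta > 1 then \liminf_{k\to\infty} h^k(p) > 0 for every p \in (0,1). -/

import Mathlib

/-- `g α x` : the expected density after the epidemic stage on a percolated 3-tree. -/
noncomputable def g (α x : ℝ) : ℝ :=
  if x = 0 then 0
  else (1 - Real.sqrt (1 - 4 * (1 - α) * x * (1 - x))) ^ 3 / (8 * (1 - α) ^ 2 * x ^ 2)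

/-- The one-type limiting map `h(p) = g_α(1 - e^{-β p})`. -/
noncomputable def oneTypeMap (α β : ℝ) (p : ℝ) : ℝ := g α (1 - Real.exp (-(β * p)))

lemma g_bounds {α x : ℝ} (hα0 : 0 ≤ α) (hα1 : α < 1) (hx0 : 0 ≤ x) (hx1 : x ≤ 1) :
    (1 - α) * x * (1 - x) ^ 3 ≤ g α x ∧ g α x ≤ (1 - α) * x := by
  set a := 1 - α with ha
  have ha0 : 0 < a := by simp only [ha]; linarith
  have ha1 : a ≤ 1 := by simp only [ha]; linarith
  rcases eq_or_lt_of_le hx0 with h0 | hx0'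
  · simp [g, ← h0]
  · have hxne : x ≠ 0 := ne_of_gt hx0'
    rw [g, if_neg hxne]
    set D := 1 - 4 * a * x * (1 - x) with hD
    have hxx : 0 ≤ x * (1 - x) := mul_nonneg hx0 (by linarith)
    have hD0 : 0 ≤ D := by nlinarith [sq_nonneg (2 * x - 1)]
    have hD1 : D ≤ 1 := by nlinarith
    have hsqnn : 0 ≤ 1 - Real.sqrt D := by
      have := Real.sqrt_le_one.mpr hD1
      linarith
    have hs1 : 1 - 2 * a * x ≤ Real.sqrt D := by
      rcases le_or_gt (1 - 2 * a * x) 0 with h | h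
      · exact h.trans (Real.sqrt_nonneg D)
      · have hle : (1 - 2 * a * x) ^ 2 ≤ D := by
          have key : 0 ≤ (1 - a) * (a * x ^ 2) := by
            apply mul_nonneg (by linarith) (by positivity)
          nlinarith [hD]
        calc 1 - 2 * a * x = Real.sqrt ((1 - 2 * a * x) ^ 2) := (Real.sqrt_sq h.le).symm
          _ ≤ Real.sqrt D := Real.sqrt_le_sqrt hle
    have hs2 : Real.sqrt D ≤ 1 - 2 * a * x * (1 - x) := by
      have h2 : D ≤ (1 - 2 * a * x * (1 - x)) ^ 2 := by nlinarith [hD, sq_nonneg (a * x * (1 - x))]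
      have hnn : 0 ≤ 1 - 2 * a * x * (1 - x) := by nlinarith [sq_nonneg (2 * x - 1)]
      calc Real.sqrt D ≤ Real.sqrt ((1 - 2 * a * x * (1 - x)) ^ 2) := Real.sqrt_le_sqrt h2
        _ = 1 - 2 * a * x * (1 - x) := Real.sqrt_sq hnn
    have hnum_lo : (2 * a * x * (1 - x)) ^ 3 ≤ (1 - Real.sqrt D) ^ 3 := by
      apply pow_le_pow_left₀ (mul_nonneg (by positivity) (by linarith)) (by linarith)
    have hnum_hi : (1 - Real.sqrt D) ^ 3 ≤ (2 * a * x) ^ 3 := by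
      apply pow_le_pow_left₀ hsqnn (by linarith)
    have hden : 0 < 8 * a ^ 2 * x ^ 2 := by positivity
    constructor
    · rw [le_div_iff₀ hden]
      nlinarith [hnum_lo]
    · rw [div_le_iff₀ hden]
      nlinarith [hnum_hi]

theorem stmt6 (α β : ℝ) (hα : α ∈ Set.Ico (0 : ℝ) 1) (hβ : 0 < β) :
    -- (i) extinction
    ((1 - α) * β ≤ 1 → ∀ p ∈ Set.Icc (0 : ℝ) 1,
      Filter.Tendsto (fun k : ℕ => (oneTypeMap α β)^[k] p) Filter.atTop (nhds 0)) ∧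
    -- (ii) survival
    (1 < (1 - α) * β → ∀ p ∈ Set.Ioo (0 : ℝ) 1,
      0 < Filter.liminf (fun k : ℕ => (oneTypeMap α β)^[k] p) Filter.atTop) := by
  obtain ⟨hα0, hα1⟩ := hα
  set a := 1 - α with ha
  have ha0 : 0 < a := by simp only [ha]; linarith
  have ha1 : a ≤ 1 := by simp only [ha]; linarith
  -- basic facts about x(q) := 1 - e^{-βq}
  have hxmem : ∀ q : ℝ, 0 ≤ q → 0 ≤ 1 - Real.exp (-(β * q)) ∧ 1 - Real.exp (-(β * q)) ≤ 1 := by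
    intro q hq
    have h1 : Real.exp (-(β * q)) ≤ 1 := by
      rw [Real.exp_le_one_iff]
      nlinarith
    have h2 : 0 < Real.exp (-(β * q)) := Real.exp_pos _
    constructor <;> linarith
  -- bounds on oneTypeMap
  have hhub : ∀ q : ℝ, 0 ≤ q → oneTypeMap α β q ≤ a * (1 - Real.exp (-(β * q))) := by
    intro q hq
    exact (g_bounds hα0 hα1 (hxmem q hq).1 (hxmem q hq).2).2
  have hhlb : ∀ q : ℝ, 0 ≤ q →
      a * (1 - Real.exp (-(β * q))) * Real.exp (-(β * q)) ^ 3 ≤ oneTypeMap α β q := by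
    intro q hq
    have := (g_bounds hα0 hα1 (hxmem q hq).1 (hxmem q hq).2).1
    have he : 1 - (1 - Real.exp (-(β * q))) = Real.exp (-(β * q)) := by ring
    rw [he] at this
    exact this
  have hexp_le : ∀ t : ℝ, 1 - Real.exp (-t) ≤ t := by
    intro t
    have := Real.add_one_le_exp (-t)
    have h2 : 0 < Real.exp (-t) := Real.exp_pos _
    linarith
  constructor
  · -- extinction
    intro hab p hp
    set f : ℝ → ℝ := fun q => a * (1 - Real.exp (-(β * q))) with hf
    have hfcont : Continuous f := by fun_prop
    have hfmono : Monotone f := by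
      intro s t hst
      have : Real.exp (-(β * t)) ≤ Real.exp (-(β * s)) := by
        apply Real.exp_le_exp.mpr
        nlinarith
      simp only [hf]
      nlinarith
    have hf_nonneg : ∀ q, 0 ≤ q → 0 ≤ f q := by
      intro q hq
      have := (hxmem q hq).1
      positivity
    have hf_le : ∀ q, 0 ≤ q → f q ≤ q := by
      intro q hq
      have h1 : 1 - Real.exp (-(β * q)) ≤ β * q := hexp_le (β * q)
      have h2 : a * (1 - Real.exp (-(β * q))) ≤ a * (β * q) := by
        apply mul_le_mul_of_nonneg_left h1 ha0.le
      have h3 : a * (β * q) ≤ q := by nlinarith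
      simp only [hf]; linarith
    have hh_nonneg : ∀ q, 0 ≤ q → 0 ≤ oneTypeMap α β q := by
      intro q hq
      refine le_trans ?_ (hhlb q hq)
      have := (hxmem q hq).1
      positivity
    have hiter : ∀ k : ℕ, 0 ≤ (oneTypeMap α β)^[k] p ∧
        (oneTypeMap α β)^[k] p ≤ f^[k] p ∧ 0 ≤ f^[k] p := by
      intro k
      induction k with
      | zero =>
        simp only [Function.iterate_zero_apply]
        exact ⟨hp.1, le_refl p, hp.1⟩
      | succ k ih =>
        obtain ⟨h1, h2, h3⟩ := ih
        rw [Function.iterate_succ_apply', Function.iterate_succ_apply']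
        refine ⟨hh_nonneg _ h1, ?_, hf_nonneg _ h3⟩
        exact le_trans (hhub _ h1) (hfmono h2)
    set q : ℕ → ℝ := fun k => f^[k] p with hqdef
    have hq0 : ∀ k, 0 ≤ q k := fun k => (hiter k).2.2
    have hanti : Antitone q := by
      apply antitone_nat_of_succ_le
      intro k
      have : q (k + 1) = f (q k) := Function.iterate_succ_apply' f k p
      rw [this]
      exact hf_le _ (hq0 k)
    have hbdd : BddBelow (Set.range q) := ⟨0, by rintro _ ⟨k, rfl⟩; exact hq0 k⟩
    have htend : Filter.Tendsto q Filter.atTop (nhds (⨅ k, q k)) :=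
      tendsto_atTop_ciInf hanti hbdd
    set L := ⨅ k, q k with hL
    have hL0 : 0 ≤ L := le_ciInf hq0
    have hfix : f L = L := by
      have t1 : Filter.Tendsto (fun k => f (q k)) Filter.atTop (nhds (f L)) :=
        (hfcont.continuousAt.tendsto).comp htend
      have t2 : Filter.Tendsto (fun k => q (k + 1)) Filter.atTop (nhds L) :=
        htend.comp (Filter.tendsto_add_atTop_nat 1)
      have heq : (fun k => f (q k)) = fun k => q (k + 1) := by
        funext k
        exact (Function.iterate_succ_apply' f k p).symm
      rw [heq] at t1
      exact tendsto_nhds_unique t1 t2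
    have hL0' : L = 0 := by
      by_contra hne
      have hLpos : 0 < L := lt_of_le_of_ne hL0 (Ne.symm hne)
      have h1 : 1 - Real.exp (-(β * L)) < β * L := by
        have := Real.add_one_lt_exp (x := -(β * L)) (by nlinarith)
        have h2 : 0 < Real.exp (-(β * L)) := Real.exp_pos _
        linarith
      have h2 : f L < L := by
        have h3 : a * (1 - Real.exp (-(β * L))) < a * (β * L) :=
          mul_lt_mul_of_pos_left h1 ha0
        have h4 : a * (β * L) ≤ L := by nlinarith
        simp only [hf]; linarith
      rw [hfix] at h2
      exact lt_irrefl _ h2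
    rw [hL0'] at htend
    exact squeeze_zero (fun k => (hiter k).1) (fun k => (hiter k).2.1) htend
  · -- survival
    intro hab p hp
    obtain ⟨hp0, hp1⟩ := hp
    have haβ : 0 < a * β := by linarith
    set δ := Real.log (a * β) / (4 * β) with hδdef
    have hδ : 0 < δ := div_pos (Real.log_pos hab) (by linarith)
    have hexp4 : Real.exp (-(4 * β * δ)) = (a * β)⁻¹ := by
      have : 4 * β * δ = Real.log (a * β) := by
        rw [hδdef]; field_simp
      rw [this, Real.exp_neg, Real.exp_log haβ]
    set m := a * (1 - Real.exp (-(β * δ))) * Real.exp (-(3 * β)) with hmdef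
    have hm : 0 < m := by
      have h1 : Real.exp (-(β * δ)) < 1 := by
        rw [Real.exp_lt_one_iff]
        nlinarith
      have h2 : 0 < Real.exp (-(3 * β)) := Real.exp_pos _
      have h3 : 0 < 1 - Real.exp (-(β * δ)) := by linarith
      exact mul_pos (mul_pos ha0 h3) h2
    -- h(q) > 0 for q > 0
    have hhpos : ∀ q : ℝ, 0 < q → 0 < oneTypeMap α β q := by
      intro q hq
      refine lt_of_lt_of_le ?_ (hhlb q hq.le)
      have h1 : Real.exp (-(β * q)) < 1 := by
        rw [Real.exp_lt_one_iff]; nlinarith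
      have h2 : 0 < Real.exp (-(β * q)) := Real.exp_pos _
      have h3 : 0 < 1 - Real.exp (-(β * q)) := by linarith
      exact mul_pos (mul_pos ha0 h3) (by positivity)
    -- h(q) ≤ 1
    have hhle1 : ∀ q : ℝ, 0 ≤ q → oneTypeMap α β q ≤ 1 := by
      intro q hq
      refine le_trans (hhub q hq) ?_
      have := (hxmem q hq).2
      have := (hxmem q hq).1
      nlinarith
    -- step 1 : for 0 < q ≤ δ, q ≤ h(q)
    have step1 : ∀ q : ℝ, 0 < q → q ≤ δ → q ≤ oneTypeMap α β q := by
      intro q hq hqδ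
      refine le_trans ?_ (hhlb q hq.le)
      set t := β * q with htdef
      have ht : 0 < t := by positivity
      have hE : Real.exp (-t) * Real.exp t = 1 := by
        rw [← Real.exp_add]; simp
      have h2 : t + 1 ≤ Real.exp t := Real.add_one_le_exp t
      have hEp : 0 < Real.exp (-t) := Real.exp_pos _
      have h3 : t * Real.exp (-t) ≤ 1 - Real.exp (-t) := by nlinarith
      have h4 : Real.exp (-t) ^ 4 = Real.exp (-(4 * t)) := by
        rw [← Real.exp_nat_mul]
        norm_num
      have h5 : Real.exp (-(4 * β * δ)) ≤ Real.exp (-(4 * t)) := by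
        apply Real.exp_le_exp.mpr
        simp only [htdef]
        nlinarith
      rw [hexp4] at h5
      have h6 : a * t * (a * β)⁻¹ = q := by
        field_simp [htdef]
        ring
      calc q = a * t * (a * β)⁻¹ := h6.symm
        _ ≤ a * t * Real.exp (-t) ^ 4 := by
            apply mul_le_mul_of_nonneg_left (by rw [h4]; exact h5) (by positivity)
        _ = a * (t * Real.exp (-t)) * Real.exp (-t) ^ 3 := by ring
        _ ≤ a * (1 - Real.exp (-t)) * Real.exp (-t) ^ 3 := by
            apply mul_le_mul_of_nonneg_right _ (by positivity)
            exact mul_le_mul_of_nonneg_left h3 ha0.le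
    -- step 2 : for δ ≤ q ≤ 1, m ≤ h(q)
    have step2 : ∀ q : ℝ, δ ≤ q → q ≤ 1 → m ≤ oneTypeMap α β q := by
      intro q hq1 hq2
      have hq0 : 0 ≤ q := le_trans hδ.le hq1
      refine le_trans ?_ (hhlb q hq0)
      have e1 : Real.exp (-(β * q)) ≤ Real.exp (-(β * δ)) := by
        apply Real.exp_le_exp.mpr; nlinarith
      have e2 : Real.exp (-(3 * β)) ≤ Real.exp (-(β * q)) ^ 3 := by
        have h3 : Real.exp (-(β * q)) ^ 3 = Real.exp (3 * (-(β * q))) := by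
          rw [← Real.exp_nat_mul]
          norm_num
        rw [h3]
        apply Real.exp_le_exp.mpr
        nlinarith
      have f1 : a * (1 - Real.exp (-(β * δ))) ≤ a * (1 - Real.exp (-(β * q))) :=
        mul_le_mul_of_nonneg_left (by linarith) ha0.le
      have hnn1 : 0 ≤ a * (1 - Real.exp (-(β * δ))) := by
        have h1 : Real.exp (-(β * δ)) ≤ 1 := by
          rw [Real.exp_le_one_iff]; nlinarith
        exact mul_nonneg ha0.le (by linarith)
      calc m = a * (1 - Real.exp (-(β * δ))) * Real.exp (-(3 * β)) := hmdef
        _ ≤ a * (1 - Real.exp (-(β * q))) * Real.exp (-(β * q)) ^ 3 :=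
            mul_le_mul f1 e2 (Real.exp_pos _).le (le_trans hnn1 f1)
    -- the combined constant
    set c := min δ m with hcdef
    set C := min p c with hCdef
    have hc : 0 < c := lt_min hδ hm
    have hC : 0 < C := lt_min hp0 hc
    -- induction: iterates stay in (0,1] and above C
    have hiter : ∀ k : ℕ, 0 < (oneTypeMap α β)^[k] p ∧ (oneTypeMap α β)^[k] p ≤ 1 ∧
        C ≤ (oneTypeMap α β)^[k] p := by
      intro k
      induction k with
      | zero =>
        simp only [Function.iterate_zero_apply]
        exact ⟨hp0, hp1.le, min_le_left p c⟩
      | succ k ih =>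
        obtain ⟨h1, h2, h3⟩ := ih
        set q := (oneTypeMap α β)^[k] p with hq
        rw [Function.iterate_succ_apply']
        refine ⟨hhpos q h1, hhle1 q h1.le, ?_⟩
        rcases le_or_gt q δ with hcase | hcase
        · -- q ≤ δ : h(q) ≥ q ≥ C
          exact le_trans h3 (step1 q h1 hcase)
        · -- δ < q : h(q) ≥ m ≥ c ≥ C
          have : m ≤ oneTypeMap α β q := step2 q hcase.le h2
          have hCm : C ≤ m := le_trans (min_le_right p c) (min_le_right δ m)
          linarith
    -- conclude about liminf
    have hbound : ∀ k : ℕ, C ≤ (oneTypeMap α β)^[k] p := fun k => (hiter k).2.2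
    have hcob : Filter.IsCoboundedUnder (· ≥ ·) Filter.atTop
        (fun k : ℕ => (oneTypeMap α β)^[k] p) :=
      Filter.isCoboundedUnder_ge_of_le Filter.atTop (fun k => (hiter k).2.1)
    have : C ≤ Filter.liminf (fun k : ℕ => (oneTypeMap α β)^[k] p) Filter.atTop :=
      Filter.le_liminf_of_le hcob (Filter.Eventually.of_forall hbound)
    exact lt_of_lt_of_le hC this
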